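/- arXiv:1402.4756 — 2 statements merged into one kernel-verified Lean document; each statement's English description precedes it below -/
import Mathlib

section
/- Let φ : ℝ → ℝ be Lipschitz with constant K > 0 and 1-periodic, let p, q be coprime with q ≥ 1, set M_A = sup A_q(φ) and m_A = inf A_q(φ), and define γ^−_{p/q}(a) = γ^l_{p/q}(a) for a ≥ 0 and γ^−_{p/q}(a) = γ^r_{p/q}(a) for a < 0, and γ^+_{p/q}(a) = γ^r_{p/q}(a) for a ≥ 0 and γ^+_{p/q}(a) = γ^l_{p/q}(a) for a < 0. Then γ^−_{p/q}(a) = p/q − M_A·a + o(a) and γ^+_{p/q}(a) = p/q − m_A·a + o(a) as a → 0; that is, lim_{a→0} (γ^−_{p/q}(a) − p/q)/a = −M_A and lim_{a→0} (γ^+_{p/q}(a) − p/q)/a = −m_A. -/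
open Filter Topology Set

/-- `τ` is the translation number of `F`: for every `x`, `(F^[n] x - x)/n → τ`. -/
def IsTransNum (F : ℝ → ℝ) (τ : ℝ) : Prop :=
  ∀ x : ℝ, Filter.Tendsto (fun n : ℕ => (F^[n] x - x) / n) Filter.atTop (nhds τ)

/-- The average `A_q(φ)` of the translates of `φ` by `p/q`. -/
noncomputable def avgA (φ : ℝ → ℝ) (p : ℤ) (q : ℕ) (x : ℝ) : ℝ :=
  (1 / (q : ℝ)) * ∑ k ∈ Finset.range q, φ (x + (k : ℝ) * (p : ℝ) / (q : ℝ))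

private def Ffun (φ : ℝ → ℝ) (t a : ℝ) (x : ℝ) : ℝ := x + t + a * φ x

lemma iter_formula (φ : ℝ → ℝ) (t a : ℝ) : ∀ (k : ℕ) (x : ℝ),
    (Ffun φ t a)^[k] x = x + k * t + a * ∑ j ∈ Finset.range k, φ ((Ffun φ t a)^[j] x) := by
  intro k x
  induction k with
  | zero => simp
  | succ n ih =>
    rw [Function.iterate_succ_apply']
    show (Ffun φ t a)^[n] x + t + a * φ ((Ffun φ t a)^[n] x) = _
    rw [Finset.sum_range_succ]
    push_cast
    linear_combination ih

lemma iter_bound (φ : ℝ → ℝ) (t a C : ℝ) (hC : ∀ y, |φ y| ≤ C) (k : ℕ) (x : ℝ) :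
    |(Ffun φ t a)^[k] x - (x + k * t)| ≤ k * (|a| * C) := by
  have h := iter_formula φ t a k x
  have h2 : (Ffun φ t a)^[k] x - (x + k * t) = a * ∑ j ∈ Finset.range k, φ ((Ffun φ t a)^[j] x) := by
    rw [h]; ring
  rw [h2, abs_mul]
  have : |∑ j ∈ Finset.range k, φ ((Ffun φ t a)^[j] x)| ≤ k * C := by
    calc |∑ j ∈ Finset.range k, φ ((Ffun φ t a)^[j] x)|
        ≤ ∑ j ∈ Finset.range k, |φ ((Ffun φ t a)^[j] x)| := Finset.abs_sum_le_sum_abs _ _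
      _ ≤ ∑ _j ∈ Finset.range k, C := Finset.sum_le_sum fun j _ => hC _
      _ = k * C := by simp [mul_comm]
  have ha : (0:ℝ) ≤ |a| := abs_nonneg a
  calc |a| * |∑ j ∈ Finset.range k, φ ((Ffun φ t a)^[j] x)| ≤ |a| * (k * C) :=
        mul_le_mul_of_nonneg_left this ha
    _ = k * (|a| * C) := by ring


private noncomputable def Flift (φ : ℝ → ℝ) (K t a : ℝ)
    (hLip : ∀ x y : ℝ, |φ x - φ y| ≤ K * |x - y|)
    (hper : ∀ x : ℝ, φ (x + 1) = φ x) (ha : |a| * K ≤ 1) : CircleDeg1Lift where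
  toFun := Ffun φ t a
  monotone' := by
    intro x y hxy
    have h1 : |a * (φ y - φ x)| ≤ |a| * (K * |y - x|) := by
      rw [abs_mul]
      exact mul_le_mul_of_nonneg_left (hLip y x) (abs_nonneg a)
    rw [abs_le] at h1
    have h2 : |y - x| = y - x := abs_of_nonneg (by linarith)
    rw [h2] at h1
    have h3 : |a| * (K * (y - x)) ≤ y - x := by
      have h4 := mul_le_mul_of_nonneg_right ha (sub_nonneg.2 hxy)
      nlinarith
    show Ffun φ t a x ≤ Ffun φ t a y
    simp only [Ffun]
    nlinarith [h1.1, h1.2]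
  map_add_one' := by
    intro x
    show Ffun φ t a (x + 1) = Ffun φ t a x + 1
    simp only [Ffun, hper]
    ring

private lemma phi_cont {φ : ℝ → ℝ} {K : ℝ} (hK : 0 < K)
    (hLip : ∀ x y : ℝ, |φ x - φ y| ≤ K * |x - y|) : Continuous φ := by
  have : LipschitzWith (Real.toNNReal K) φ := by
    apply LipschitzWith.of_dist_le_mul
    intro x y
    rw [Real.dist_eq, Real.dist_eq, Real.coe_toNNReal K hK.le]
    exact hLip x y
  exact this.continuous

private lemma Ffun_cont {φ : ℝ → ℝ} {K : ℝ} (hK : 0 < K)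
    (hLip : ∀ x y : ℝ, |φ x - φ y| ≤ K * |x - y|) (t a : ℝ) :
    Continuous (Ffun φ t a) := by
  have := phi_cont hK hLip
  unfold Ffun
  continuity

private lemma tau_eq {φ : ℝ → ℝ} {K : ℝ} (hK : 0 < K)
    (hLip : ∀ x y : ℝ, |φ x - φ y| ≤ K * |x - y|)
    (hper : ∀ x : ℝ, φ (x + 1) = φ x)
    {τ : ℝ → ℝ → ℝ}
    (hτ : ∀ t : ℝ, ∀ a ∈ Set.Ioo (-(1 / K)) (1 / K),
      IsTransNum (fun x => x + t + a * φ x) (τ t a))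
    {t a : ℝ} (ha : a ∈ Set.Ioo (-(1 / K)) (1 / K)) (haK : |a| * K ≤ 1) :
    τ t a = (Flift φ K t a hLip hper haK).translationNumber := by
  have h1 : IsTransNum (Ffun φ t a) (τ t a) := hτ t a ha
  have h2 := (Flift φ K t a hLip hper haK).tendsto_translationNumber 0
  refine tendsto_nhds_unique (h1 0) (h2.congr fun n => ?_)
  congr 1
  rw [CircleDeg1Lift.coe_pow]
  rfl

private lemma mem_char {φ : ℝ → ℝ} {K : ℝ} (hK : 0 < K)
    (hLip : ∀ x y : ℝ, |φ x - φ y| ≤ K * |x - y|)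
    (hper : ∀ x : ℝ, φ (x + 1) = φ x)
    {τ : ℝ → ℝ → ℝ}
    (hτ : ∀ t : ℝ, ∀ a ∈ Set.Ioo (-(1 / K)) (1 / K),
      IsTransNum (fun x => x + t + a * φ x) (τ t a))
    {t a : ℝ} (ha : a ∈ Set.Ioo (-(1 / K)) (1 / K)) (haK : |a| * K ≤ 1)
    {p : ℤ} {q : ℕ} (hq : 0 < q) :
    τ t a = (p : ℝ) / (q : ℝ) ↔ ∃ x, (Ffun φ t a)^[q] x = x + p := by
  have hcont : Continuous ⇑(Flift φ K t a hLip hper haK) := Ffun_cont hK hLip t a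
  have hcoe : ∀ x : ℝ, (Flift φ K t a hLip hper haK ^ q) x = (Ffun φ t a)^[q] x := fun x => by
    rw [CircleDeg1Lift.coe_pow]; rfl
  rw [tau_eq hK hLip hper hτ ha haK,
    (Flift φ K t a hLip hper haK).translationNumber_eq_rat_iff hcont hq]
  simp only [hcoe]

private lemma fp_key {φ : ℝ → ℝ} {K C : ℝ} (hK : 0 < K)
    (hLip : ∀ x y : ℝ, |φ x - φ y| ≤ K * |x - y|) (hC : ∀ y, |φ y| ≤ C)
    {p : ℤ} {q : ℕ} (hq : 0 < q) {t a x : ℝ}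
    (hx : (Ffun φ t a)^[q] x = x + p) :
    |t - (p : ℝ) / (q : ℝ)| ≤ |a| * C ∧
    |(t - (p : ℝ) / (q : ℝ)) + a * avgA φ p q x| ≤ a ^ 2 * (2 * K * C * q) := by
  have hq0 : (0:ℝ) < q := Nat.cast_pos.2 hq
  have hC0 : (0:ℝ) ≤ C := le_trans (abs_nonneg _) (hC 0)
  set S := ∑ k ∈ Finset.range q, φ ((Ffun φ t a)^[k] x) with hSdef
  have heq : (q : ℝ) * t + a * S = p := by
    have h := iter_formula φ t a q x
    rw [hx] at h
    linarith
  have hSb : |S| ≤ q * C := by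
    calc |S| ≤ ∑ k ∈ Finset.range q, |φ ((Ffun φ t a)^[k] x)| := Finset.abs_sum_le_sum_abs _ _
      _ ≤ ∑ _k ∈ Finset.range q, C := Finset.sum_le_sum fun k _ => hC _
      _ = q * C := by simp [mul_comm]
  have ht : t - (p : ℝ) / q = -(a * S) / q := by
    field_simp
    linarith
  have h1 : |t - (p : ℝ) / q| ≤ |a| * C := by
    rw [ht, abs_div, abs_neg, abs_mul, abs_of_pos hq0, div_le_iff₀ hq0]
    calc |a| * |S| ≤ |a| * (q * C) := mul_le_mul_of_nonneg_left hSb (abs_nonneg a)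
      _ = |a| * C * q := by ring
  refine ⟨h1, ?_⟩
  have hdiff : (t - (p : ℝ) / q) + a * avgA φ p q x
      = (a / q) * ∑ k ∈ Finset.range q,
          (φ (x + (k : ℝ) * (p : ℝ) / (q : ℝ)) - φ ((Ffun φ t a)^[k] x)) := by
    rw [ht, avgA, Finset.sum_sub_distrib]
    rw [hSdef]
    ring
  have hterm : ∀ k ∈ Finset.range q,
      |φ (x + (k : ℝ) * (p : ℝ) / (q : ℝ)) - φ ((Ffun φ t a)^[k] x)| ≤ K * (2 * q * (|a| * C)) := by
    intro k hk
    have hk' : (k : ℝ) ≤ q := by exact_mod_cast (Finset.mem_range.1 hk).le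
    have hk0 : (0:ℝ) ≤ (k:ℝ) := Nat.cast_nonneg k
    have hb1 := iter_bound φ t a C hC k x
    have haC : (0:ℝ) ≤ |a| * C := mul_nonneg (abs_nonneg a) hC0
    have hb2 : |(Ffun φ t a)^[k] x - (x + (k : ℝ) * (p : ℝ) / (q : ℝ))| ≤ 2 * q * (|a| * C) := by
      have hsplit : (Ffun φ t a)^[k] x - (x + (k : ℝ) * (p : ℝ) / (q : ℝ))
          = ((Ffun φ t a)^[k] x - (x + (k : ℝ) * t)) + (k : ℝ) * (t - (p : ℝ) / q) := by
        ring
      rw [hsplit]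
      have h3 : |(k : ℝ) * (t - (p : ℝ) / q)| ≤ (q : ℝ) * (|a| * C) := by
        rw [abs_mul, abs_of_nonneg hk0]
        exact mul_le_mul hk' h1 (abs_nonneg _) hq0.le
      have h4 : |(Ffun φ t a)^[k] x - (x + (k : ℝ) * t)| ≤ (q : ℝ) * (|a| * C) :=
        le_trans hb1 (mul_le_mul_of_nonneg_right hk' haC)
      calc |((Ffun φ t a)^[k] x - (x + (k : ℝ) * t)) + (k : ℝ) * (t - (p : ℝ) / q)|
          ≤ |(Ffun φ t a)^[k] x - (x + (k : ℝ) * t)| + |(k : ℝ) * (t - (p : ℝ) / q)| := abs_add_le _ _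
        _ ≤ (q : ℝ) * (|a| * C) + (q : ℝ) * (|a| * C) := add_le_add h4 h3
        _ = 2 * q * (|a| * C) := by ring
    calc |φ (x + (k : ℝ) * (p : ℝ) / (q : ℝ)) - φ ((Ffun φ t a)^[k] x)|
        ≤ K * |x + (k : ℝ) * (p : ℝ) / (q : ℝ) - (Ffun φ t a)^[k] x| := hLip _ _
      _ ≤ K * (2 * q * (|a| * C)) := by
          rw [abs_sub_comm]
          exact mul_le_mul_of_nonneg_left hb2 hK.le
  have hsum : |∑ k ∈ Finset.range q,
      (φ (x + (k : ℝ) * (p : ℝ) / (q : ℝ)) - φ ((Ffun φ t a)^[k] x))| ≤ q * (K * (2 * q * (|a| * C))) := by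
    calc |∑ k ∈ Finset.range q, (φ (x + (k : ℝ) * (p : ℝ) / (q : ℝ)) - φ ((Ffun φ t a)^[k] x))|
        ≤ ∑ k ∈ Finset.range q, |φ (x + (k : ℝ) * (p : ℝ) / (q : ℝ)) - φ ((Ffun φ t a)^[k] x)| :=
          Finset.abs_sum_le_sum_abs _ _
      _ ≤ ∑ _k ∈ Finset.range q, K * (2 * q * (|a| * C)) := Finset.sum_le_sum hterm
      _ = q * (K * (2 * q * (|a| * C))) := by simp [mul_comm]
  rw [hdiff, abs_mul, abs_div, abs_of_pos hq0]
  have haa : |a| ^ 2 = a ^ 2 := sq_abs a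
  calc |a| / q * |∑ k ∈ Finset.range q,
        (φ (x + (k : ℝ) * (p : ℝ) / (q : ℝ)) - φ ((Ffun φ t a)^[k] x))|
      ≤ |a| / q * (q * (K * (2 * q * (|a| * C)))) := by
        apply mul_le_mul_of_nonneg_left hsum (by positivity)
    _ = a ^ 2 * (2 * K * C * q) := by rw [← haa, div_mul_eq_mul_div, div_eq_iff hq0.ne']; ring

private lemma iter_cont_in_t {φ : ℝ → ℝ} {K : ℝ} (hK : 0 < K)
    (hLip : ∀ x y : ℝ, |φ x - φ y| ≤ K * |x - y|) (a : ℝ) (k : ℕ) (x : ℝ) :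
    Continuous (fun t => (Ffun φ t a)^[k] x) := by
  have hφ := phi_cont hK hLip
  induction k with
  | zero => simpa using continuous_const
  | succ n ih =>
    have : (fun t => (Ffun φ t a)^[n+1] x)
        = fun t => (Ffun φ t a)^[n] x + t + a * φ ((Ffun φ t a)^[n] x) := by
      funext t
      rw [Function.iterate_succ_apply']
      rfl
    rw [this]
    exact (ih.add continuous_id).add (continuous_const.mul (hφ.comp ih))

private lemma exists_fix {φ : ℝ → ℝ} {K C : ℝ} (hK : 0 < K)
    (hLip : ∀ x y : ℝ, |φ x - φ y| ≤ K * |x - y|) (hC : ∀ y, |φ y| ≤ C)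
    (p : ℤ) {q : ℕ} (hq : 0 < q) (a : ℝ) (x : ℝ) :
    ∃ t : ℝ, (Ffun φ t a)^[q] x = x + p := by
  have hq0 : (0:ℝ) < q := Nat.cast_pos.2 hq
  have hC0 : (0:ℝ) ≤ C := le_trans (abs_nonneg _) (hC 0)
  set g : ℝ → ℝ := fun t => (Ffun φ t a)^[q] x - (x + p) with hg
  have hgc : Continuous g := (iter_cont_in_t hK hLip a q x).sub continuous_const
  have hval : ∀ t, g t = (q:ℝ) * t + a * (∑ j ∈ Finset.range q, φ ((Ffun φ t a)^[j] x)) - p := by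
    intro t
    rw [hg]
    simp only [iter_formula φ t a q x]
    ring
  have hbound : ∀ t, |a * (∑ j ∈ Finset.range q, φ ((Ffun φ t a)^[j] x))| ≤ q * (|a| * C) := by
    intro t
    rw [abs_mul]
    have : |∑ j ∈ Finset.range q, φ ((Ffun φ t a)^[j] x)| ≤ q * C := by
      calc |∑ j ∈ Finset.range q, φ ((Ffun φ t a)^[j] x)|
          ≤ ∑ j ∈ Finset.range q, |φ ((Ffun φ t a)^[j] x)| := Finset.abs_sum_le_sum_abs _ _
        _ ≤ ∑ _j ∈ Finset.range q, C := Finset.sum_le_sum fun j _ => hC _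
        _ = q * C := by simp [mul_comm]
    calc |a| * |∑ j ∈ Finset.range q, φ ((Ffun φ t a)^[j] x)| ≤ |a| * (q * C) :=
          mul_le_mul_of_nonneg_left this (abs_nonneg a)
      _ = q * (|a| * C) := by ring
  set t₀ : ℝ := (p:ℝ)/q - |a| * C - 1 with ht₀
  set t₁ : ℝ := (p:ℝ)/q + |a| * C + 1 with ht₁
  have ht01 : t₀ ≤ t₁ := by
    rw [ht₀, ht₁]
    nlinarith [mul_nonneg (abs_nonneg a) hC0]
  have hg0 : g t₀ ≤ 0 := by
    have h := hbound t₀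
    rw [abs_le] at h
    have := hval t₀
    rw [this, ht₀]
    have hcancel : (q:ℝ) * ((p:ℝ)/q - |a| * C - 1) = p - q * (|a| * C) - q := by
      field_simp
      try ring
    nlinarith [h.2]
  have hg1 : 0 ≤ g t₁ := by
    have h := hbound t₁
    rw [abs_le] at h
    have := hval t₁
    rw [this, ht₁]
    have hcancel : (q:ℝ) * ((p:ℝ)/q + |a| * C + 1) = p + q * (|a| * C) + q := by
      field_simp
      try ring
    nlinarith [h.1]
  have hsub := intermediate_value_Icc ht01 hgc.continuousOn
  have h0 : (0:ℝ) ∈ Icc (g t₀) (g t₁) := ⟨hg0, hg1⟩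
  obtain ⟨t, _, htfix⟩ := hsub h0
  refine ⟨t, ?_⟩
  have htfix' : (Ffun φ t a)^[q] x - (x + (p:ℝ)) = 0 := htfix
  linarith

private lemma phi_bdd {φ : ℝ → ℝ} {K : ℝ} (hK : 0 < K)
    (hLip : ∀ x y : ℝ, |φ x - φ y| ≤ K * |x - y|)
    (hper : ∀ x : ℝ, φ (x + 1) = φ x) : ∀ y : ℝ, |φ y| ≤ |φ 0| + K := by
  intro y
  have hp : Function.Periodic φ 1 := hper
  have hfr : φ y = φ (Int.fract y) := by
    have h := hp.sub_int_mul_eq (x := y) ⌊y⌋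
    rw [mul_one] at h
    rw [← h]
    rfl
  rw [hfr]
  have h1 : |φ (Int.fract y) - φ 0| ≤ K * |Int.fract y - 0| := hLip _ _
  have h2 : |Int.fract y - 0| ≤ 1 := by
    rw [sub_zero, abs_of_nonneg (Int.fract_nonneg y)]
    exact (Int.fract_lt_one y).le
  have h3 : |φ (Int.fract y)| ≤ |φ 0| + |φ (Int.fract y) - φ 0| := by
    calc |φ (Int.fract y)| = |φ 0 + (φ (Int.fract y) - φ 0)| := by ring_nf
      _ ≤ |φ 0| + |φ (Int.fract y) - φ 0| := abs_add_le _ _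
  nlinarith [abs_nonneg (φ (Int.fract y) - φ 0)]

private lemma avg_bdd {φ : ℝ → ℝ} {C : ℝ} (hC : ∀ y, |φ y| ≤ C) (p : ℤ) {q : ℕ} (hq : 0 < q) :
    ∀ x : ℝ, |avgA φ p q x| ≤ C := by
  intro x
  have hq0 : (0:ℝ) < q := Nat.cast_pos.2 hq
  rw [avgA, abs_mul, abs_of_pos (by positivity : (0:ℝ) < 1 / (q:ℝ))]
  have : |∑ k ∈ Finset.range q, φ (x + (k:ℝ) * (p:ℝ) / (q:ℝ))| ≤ q * C := by
    calc |∑ k ∈ Finset.range q, φ (x + (k:ℝ) * (p:ℝ) / (q:ℝ))|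
        ≤ ∑ k ∈ Finset.range q, |φ (x + (k:ℝ) * (p:ℝ) / (q:ℝ))| := Finset.abs_sum_le_sum_abs _ _
      _ ≤ ∑ _k ∈ Finset.range q, C := Finset.sum_le_sum fun k _ => hC _
      _ = q * C := by simp [mul_comm]
  calc 1 / (q:ℝ) * |∑ k ∈ Finset.range q, φ (x + (k:ℝ) * (p:ℝ) / (q:ℝ))|
      ≤ 1 / (q:ℝ) * ((q:ℝ) * C) := mul_le_mul_of_nonneg_left this (by positivity)
    _ = C := by field_simp

set_option maxHeartbeats 1000000 in
private lemma main_half (φ : ℝ → ℝ) (K : ℝ) (hK : 0 < K)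
    (hLip : ∀ x y : ℝ, |φ x - φ y| ≤ K * |x - y|)
    (hper : ∀ x : ℝ, φ (x + 1) = φ x)
    (τ : ℝ → ℝ → ℝ)
    (hτ : ∀ t : ℝ, ∀ a ∈ Set.Ioo (-(1 / K)) (1 / K),
      IsTransNum (fun x => x + t + a * φ x) (τ t a))
    (p : ℤ) (q : ℕ) (hq : 1 ≤ q)
    (γl γr γm : ℝ → ℝ)
    (hγl : ∀ a : ℝ, γl a = sInf {t : ℝ | τ t a = (p : ℝ) / (q : ℝ)})
    (hγr : ∀ a : ℝ, γr a = sSup {t : ℝ | τ t a = (p : ℝ) / (q : ℝ)})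
    (hγm : ∀ a : ℝ, γm a = if 0 ≤ a then γl a else γr a) :
    Filter.Tendsto (fun a : ℝ => (γm a - (p : ℝ) / (q : ℝ)) / a)
      (nhdsWithin 0 {0}ᶜ) (nhds (-sSup (Set.range (avgA φ p q)))) := by
  have hq0 : 0 < q := hq
  have hqR : (0:ℝ) < q := Nat.cast_pos.2 hq0
  set C : ℝ := |φ 0| + K with hCdef
  have hC : ∀ y, |φ y| ≤ C := phi_bdd hK hLip hper
  have hC0 : (0:ℝ) ≤ C := le_trans (abs_nonneg _) (hC 0)
  set D : ℝ := 2 * K * C * q with hDdef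
  have hD0 : 0 ≤ D := by positivity
  set c : ℝ := (p : ℝ) / (q : ℝ) with hcdef
  set A : ℝ → ℝ := avgA φ p q with hAdef
  have hAb : ∀ x, |A x| ≤ C := avg_bdd hC p hq0
  have hrange_ne : (Set.range A).Nonempty := ⟨A 0, Set.mem_range_self 0⟩
  have hbddA : BddAbove (Set.range A) := by
    refine ⟨C, ?_⟩
    rintro _ ⟨x, rfl⟩
    exact le_trans (le_abs_self _) (hAb x)
  set MA : ℝ := sSup (Set.range A) with hMAdef
  have hAleMA : ∀ x, A x ≤ MA := fun x => le_csSup hbddA ⟨x, rfl⟩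
  rw [Metric.tendsto_nhdsWithin_nhds]
  intro ε hε
  obtain ⟨_, ⟨x₀, rfl⟩, hx₀⟩ := exists_lt_of_lt_csSup hrange_ne
    (show MA - ε/3 < MA by linarith)
  refine ⟨min (1/(2*K)) (ε/(3*(D+1))), by positivity, ?_⟩
  intro a ha hdist
  have ha0 : a ≠ 0 := ha
  rw [Real.dist_eq, sub_zero] at hdist
  have haδ1 : |a| < 1/(2*K) := lt_of_lt_of_le hdist (min_le_left _ _)
  have haδ2 : |a| < ε/(3*(D+1)) := lt_of_lt_of_le hdist (min_le_right _ _)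
  have haJ : a ∈ Set.Ioo (-(1/K)) (1/K) := by
    rw [Set.mem_Ioo]
    have h1 : 1/(2*K) < 1/K := by
      rw [div_lt_div_iff₀ (by positivity) hK]
      nlinarith
    rw [abs_lt] at haδ1
    constructor <;> nlinarith
  have haK : |a| * K ≤ 1 := by
    have : |a| * K < 1/(2*K) * K := mul_lt_mul_of_pos_right haδ1 hK
    have h2 : 1/(2*K) * K = 1/2 := by field_simp
    nlinarith
  have haD : |a| * D < ε/3 := by
    have h1 : |a| * (D+1) < ε/(3*(D+1)) * (D+1) := by
      apply mul_lt_mul_of_pos_right haδ2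
      linarith
    have h2 : ε/(3*(D+1)) * (D+1) = ε/3 := by field_simp
    nlinarith [abs_nonneg a]
  -- the fiber set
  set S : Set ℝ := {t : ℝ | τ t a = c} with hSdef
  have hmem : ∀ t : ℝ, t ∈ S ↔ ∃ x, (Ffun φ t a)^[q] x = x + p := fun t =>
    mem_char hK hLip hper hτ haJ haK hq0
  -- every element of the fiber satisfies the key estimates
  have hbnd : ∀ t ∈ S, ∃ x : ℝ, |(t - c) + a * A x| ≤ a^2 * D := by
    intro t ht
    obtain ⟨x, hx⟩ := (hmem t).1 ht
    exact ⟨x, (fp_key hK hLip hC hq0 hx).2⟩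
  -- a witness close to the sup
  obtain ⟨t₀, ht₀fix⟩ := exists_fix hK hLip hC p hq0 a x₀
  have ht₀S : t₀ ∈ S := (hmem t₀).2 ⟨x₀, ht₀fix⟩
  have ht₀key : |(t₀ - c) + a * A x₀| ≤ a^2 * D := (fp_key hK hLip hC hq0 ht₀fix).2
  have hSne : S.Nonempty := ⟨t₀, ht₀S⟩
  -- uniform bounds on S
  have hub : ∀ t ∈ S, t ≤ c - a * MA + a^2 * D ∨ True := fun _ _ => Or.inr trivial
  -- goal reduction
  have hmain : |γm a - c + a * MA| ≤ |a| * (ε/3 + |a| * D) := by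
    rcases lt_or_ge 0 a with hapos | haneg
    · -- a > 0 : γm a = γl a = sInf S
      have hγ : γm a = sInf S := by rw [hγm a, if_pos hapos.le, hγl a]
      have hlow : ∀ t ∈ S, c - a * MA - a^2 * D ≤ t := by
        intro t ht
        obtain ⟨x, hx⟩ := hbnd t ht
        rw [abs_le] at hx
        have hAx : A x ≤ MA := hAleMA x
        nlinarith [hx.1]
      have hbb : BddBelow S := ⟨c - a * MA - a^2 * D, fun t ht => hlow t ht⟩
      have h1 : c - a * MA - a^2 * D ≤ sInf S := le_csInf hSne hlow
      have h2 : sInf S ≤ t₀ := csInf_le hbb ht₀S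
      have h3 : t₀ ≤ c - a * A x₀ + a^2 * D := by
        rw [abs_le] at ht₀key
        nlinarith [ht₀key.2]
      have h4 : t₀ ≤ c - a * MA + a * (ε/3) + a^2 * D := by
        have : -a * A x₀ ≤ -a * (MA - ε/3) := by nlinarith
        nlinarith
      have haa : |a| = a := abs_of_pos hapos
      rw [hγ, haa, abs_le]
      have e1 : a * (ε/3 + a*D) = a*(ε/3) + a*(a*D) := by ring
      have e3 : a^2*D = a*(a*D) := by ring
      have e2 : 0 ≤ a*(ε/3) := by positivity
      constructor
      · linarith [h1]
      · linarith [h2, h4]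
    · -- a < 0 : γm a = γr a = sSup S
      have haneg' : a < 0 := lt_of_le_of_ne haneg ha0
      have hγ : γm a = sSup S := by
        rw [hγm a, if_neg (not_le.2 haneg'), hγr a]
      have hup : ∀ t ∈ S, t ≤ c - a * MA + a^2 * D := by
        intro t ht
        obtain ⟨x, hx⟩ := hbnd t ht
        rw [abs_le] at hx
        have hAx : A x ≤ MA := hAleMA x
        nlinarith [hx.2]
      have hba : BddAbove S := ⟨c - a * MA + a^2 * D, fun t ht => hup t ht⟩
      have h1 : sSup S ≤ c - a * MA + a^2 * D := csSup_le hSne hup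
      have h2 : t₀ ≤ sSup S := le_csSup hba ht₀S
      have h3 : c - a * A x₀ - a^2 * D ≤ t₀ := by
        rw [abs_le] at ht₀key
        nlinarith [ht₀key.1]
      have h4 : c - a * MA + a * (ε/3) - a^2 * D ≤ t₀ := by
        have : -a * (MA - ε/3) ≤ -a * A x₀ := by nlinarith
        nlinarith
      have haa : |a| = -a := abs_of_neg haneg'
      rw [hγ, haa, abs_le]
      have e1 : (-a) * (ε/3 + (-a)*D) = -(a*(ε/3)) + a*(a*D) := by ring
      have e3 : a^2*D = a*(a*D) := by ring
      have e2 : a*(ε/3) ≤ 0 := mul_nonpos_iff.2 (Or.inr ⟨haneg'.le, by linarith⟩)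
      constructor
      · linarith [h2, h4]
      · linarith [h1]
  -- conclude
  rw [Real.dist_eq]
  have : (γm a - c) / a - (-MA) = (γm a - c + a * MA) / a := by
    field_simp
    try ring
  rw [this, abs_div]
  have habs0 : 0 < |a| := abs_pos.2 ha0
  rw [div_lt_iff₀ habs0]
  calc |γm a - c + a * MA| ≤ |a| * (ε/3 + |a| * D) := hmain
    _ < |a| * ε := by
      have : ε/3 + |a| * D < ε := by nlinarith
      exact mul_lt_mul_of_pos_left this habs0
    _ = ε * |a| := by ring

theorem stmt_13 (φ : ℝ → ℝ) (K : ℝ) (hK : 0 < K)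
    (hLip : ∀ x y : ℝ, |φ x - φ y| ≤ K * |x - y|)
    (hper : ∀ x : ℝ, φ (x + 1) = φ x)
    (τ : ℝ → ℝ → ℝ)
    (hτ : ∀ t : ℝ, ∀ a ∈ Set.Ioo (-(1 / K)) (1 / K),
      IsTransNum (fun x => x + t + a * φ x) (τ t a))
    (p : ℤ) (q : ℕ) (hq : 1 ≤ q) (hpq : Nat.Coprime p.natAbs q)
    (γl γr : ℝ → ℝ)
    (hγl : ∀ a : ℝ, γl a = sInf {t : ℝ | τ t a = (p : ℝ) / (q : ℝ)})
    (hγr : ∀ a : ℝ, γr a = sSup {t : ℝ | τ t a = (p : ℝ) / (q : ℝ)})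
    (γm γp : ℝ → ℝ)
    (hγm : ∀ a : ℝ, γm a = if 0 ≤ a then γl a else γr a)
    (hγp : ∀ a : ℝ, γp a = if 0 ≤ a then γr a else γl a) :
    Filter.Tendsto (fun a : ℝ => (γm a - (p : ℝ) / (q : ℝ)) / a)
      (nhdsWithin 0 {0}ᶜ) (nhds (-sSup (Set.range (avgA φ p q)))) ∧
    Filter.Tendsto (fun a : ℝ => (γp a - (p : ℝ) / (q : ℝ)) / a)
      (nhdsWithin 0 {0}ᶜ) (nhds (-sInf (Set.range (avgA φ p q)))) := by
  constructor
  · exact main_half φ K hK hLip hper τ hτ p q hq γl γr γm hγl hγr hγm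
  · -- apply main_half to -φ with a replaced by -a
    set ψ : ℝ → ℝ := fun x => -(φ x) with hψ
    set τ' : ℝ → ℝ → ℝ := fun t b => τ t (-b) with hτ'def
    set γl' : ℝ → ℝ := fun b => γl (-b) with hγl'def
    set γr' : ℝ → ℝ := fun b => γr (-b) with hγr'def
    set γm' : ℝ → ℝ := fun b => if 0 ≤ b then γl' b else γr' b with hγm'def
    have hLip' : ∀ x y : ℝ, |ψ x - ψ y| ≤ K * |x - y| := by
      intro x y
      have : ψ x - ψ y = -(φ x - φ y) := by simp [hψ]; try ring
      rw [this, abs_neg]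
      exact hLip x y
    have hper' : ∀ x : ℝ, ψ (x + 1) = ψ x := fun x => by simp [hψ, hper x]
    have hτ'' : ∀ t : ℝ, ∀ b ∈ Set.Ioo (-(1 / K)) (1 / K),
        IsTransNum (fun x => x + t + b * ψ x) (τ' t b) := by
      intro t b hb
      have hb' : -b ∈ Set.Ioo (-(1 / K)) (1 / K) := by
        rw [Set.mem_Ioo] at hb ⊢
        constructor <;> linarith [hb.1, hb.2]
      have h := hτ t (-b) hb'
      have hfun : (fun x => x + t + b * ψ x) = (fun x => x + t + (-b) * φ x) := by
        funext x
        simp [hψ]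
        try ring
      rw [hfun]
      exact h
    have hγl'' : ∀ b : ℝ, γl' b = sInf {t : ℝ | τ' t b = (p : ℝ) / (q : ℝ)} := fun b =>
      hγl (-b)
    have hγr'' : ∀ b : ℝ, γr' b = sSup {t : ℝ | τ' t b = (p : ℝ) / (q : ℝ)} := fun b =>
      hγr (-b)
    have hγm'' : ∀ b : ℝ, γm' b = if 0 ≤ b then γl' b else γr' b := fun b => rfl
    have H := main_half ψ K hK hLip' hper' τ' hτ'' p q hq γl' γr' γm' hγl'' hγr'' hγm''
    -- identify the limit
    have havg : avgA ψ p q = fun x => -(avgA φ p q x) := by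
      funext x
      rw [avgA, avgA]
      simp only [hψ]
      rw [Finset.sum_neg_distrib]
      ring
    have hrange : Set.range (avgA ψ p q) = -(Set.range (avgA φ p q)) := by
      rw [havg]
      ext y
      simp only [Set.mem_range, Set.mem_neg]
      constructor
      · rintro ⟨x, hx⟩; exact ⟨x, by linarith⟩
      · rintro ⟨x, hx⟩; exact ⟨x, by linarith⟩
    have hlim : -sSup (Set.range (avgA ψ p q)) = sInf (Set.range (avgA φ p q)) := by
      rw [hrange]
      have := Real.sInf_def (Set.range (avgA φ p q))
      linarith
    rw [hlim] at H
    -- compose with negation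
    have hneg : Filter.Tendsto (fun a : ℝ => -a) (nhdsWithin 0 {0}ᶜ)
        (nhdsWithin (0:ℝ) {0}ᶜ) := by
      rw [tendsto_nhdsWithin_iff]
      constructor
      · have h1 : Filter.Tendsto (fun a : ℝ => -a) (nhds 0) (nhds (0:ℝ)) := by
          simpa using (continuous_neg.tendsto (0:ℝ))
        exact h1.mono_left nhdsWithin_le_nhds
      · filter_upwards [self_mem_nhdsWithin] with x hx
        simp only [Set.mem_compl_iff, Set.mem_singleton_iff] at hx ⊢
        exact neg_ne_zero.2 hx
    have H2 := (H.comp hneg).neg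
    -- H2 : Tendsto (fun a => -((γm' (-a) - p/q) / (-a))) ... (𝓝 (-sInf ...))
    refine H2.congr' ?_
    filter_upwards [self_mem_nhdsWithin] with a haa
    simp only [Set.mem_compl_iff, Set.mem_singleton_iff] at haa
    have hdiv : -((γm' (-a) - (p : ℝ) / (q : ℝ)) / (-a))
        = (γm' (-a) - (p : ℝ) / (q : ℝ)) / a := by
      rw [div_neg, neg_neg]
    have hγeq : γm' (-a) = γp a := by
      rcases lt_or_gt_of_ne haa with hlt | hgt
      · have h1 : (0:ℝ) ≤ -a := by linarith
        rw [hγm'def]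
        simp only [if_pos h1, hγl'def, neg_neg]
        rw [hγp a, if_neg (not_le.2 hlt)]
      · have h1 : ¬ (0:ℝ) ≤ -a := by simp; linarith
        rw [hγm'def]
        simp only [if_neg h1, hγr'def, neg_neg]
        rw [hγp a, if_pos hgt.le]
    show -((γm' (-a) - (p : ℝ) / (q : ℝ)) / (-a)) = (γp a - (p : ℝ) / (q : ℝ)) / a
    rw [hdiv, hγeq]
end

section
/- Let r > 0 and θ ∈ ℝ, and let f be holomorphic on the open disk {z ∈ ℂ : |z| < r}. Suppose (a_n) is a sequence of nonzero real numbers with |a_n| < r/2 and a_n → 0, and for each n there are: a map F_n : ℝ → ℝ with F_n(x+1) = F_n(x) + 1 for all x, and a holomorphic function f_n on the annulus {z : |a_n|/2 < |z| < r} satisfying f_n(a_n·e^{2πix}) = a_n·e^{2πi·F_n(x)} for all x ∈ ℝ. Assume f_n → f uniformly on compact subsets of the punctured disk {z : 0 < |z| < r}, and F_n(x) → x + θ uniformly in x ∈ ℝ as n → ∞. Then f(0) = 0 and f'(0) = e^{2πiθ}. -/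
open Filter Topology Set Complex

lemma exp_I_lipschitz (s t : ℝ) :
    ‖Complex.exp ((s : ℂ) * Complex.I) - Complex.exp ((t : ℂ) * Complex.I)‖ ≤ |s - t| := by
  have hd : ∀ u : ℝ, HasDerivWithinAt (fun u : ℝ => Complex.exp ((u : ℂ) * Complex.I))
      (Complex.exp ((u : ℂ) * Complex.I) * Complex.I) Set.univ u := by
    intro u
    have h1 : HasDerivAt (fun u : ℝ => ((u : ℂ) * Complex.I)) Complex.I u := by
      simpa using (Complex.ofRealCLM.hasDerivAt (x := u)).mul_const Complex.I
    exact h1.cexp.hasDerivWithinAt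
  have h := Convex.norm_image_sub_le_of_norm_hasDerivWithin_le
    (f := fun u : ℝ => Complex.exp ((u : ℂ) * Complex.I))
    (f' := fun u : ℝ => Complex.exp ((u : ℂ) * Complex.I) * Complex.I)
    (C := 1) (fun x _ => hd x) (fun x _ => by simp [Complex.norm_exp]) convex_univ
    (mem_univ t) (mem_univ s)
  simpa [Real.norm_eq_abs] using h

lemma two_pi_cast (x : ℝ) :
    (2 * Real.pi * Complex.I * (x : ℂ)) = ((2 * Real.pi * x : ℝ) : ℂ) * Complex.I := by
  push_cast; ring

lemma abs_exp_two_pi (x : ℝ) :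
    ‖Complex.exp (2 * Real.pi * Complex.I * (x : ℂ))‖ = 1 := by
  rw [two_pi_cast]; exact Complex.norm_exp_ofReal_mul_I _

lemma exp_two_pi_lipschitz (u v : ℝ) :
    ‖Complex.exp (2 * Real.pi * Complex.I * (u : ℂ)) -
      Complex.exp (2 * Real.pi * Complex.I * (v : ℂ))‖ ≤ 2 * Real.pi * |u - v| := by
  rw [two_pi_cast, two_pi_cast]
  have h := exp_I_lipschitz (2 * Real.pi * u) (2 * Real.pi * v)
  calc ‖Complex.exp (((2*Real.pi*u : ℝ) : ℂ) * Complex.I) -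
      Complex.exp (((2*Real.pi*v : ℝ) : ℂ) * Complex.I)‖ ≤ |2*Real.pi*u - 2*Real.pi*v| := h
    _ = 2 * Real.pi * |u - v| := by
        rw [show (2*Real.pi*u - 2*Real.pi*v) = 2*Real.pi*(u - v) by ring,
          abs_mul, abs_of_pos (by positivity : (0:ℝ) < 2*Real.pi)]

lemma sphere_repr {a : ℝ} (ha : a ≠ 0) {z : ℂ} (hz : ‖z‖ = |a|) :
    ∃ x : ℝ, z = (a : ℂ) * Complex.exp (2 * Real.pi * Complex.I * (x : ℂ)) := by
  have hπ : (2 * Real.pi : ℝ) ≠ 0 := by positivity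
  have hπc : (Real.pi : ℂ) ≠ 0 := by exact_mod_cast Real.pi_ne_zero
  rcases ha.lt_or_gt with hneg | hpos
  · refine ⟨Complex.arg z / (2 * Real.pi) + 1/2, ?_⟩
    have h1 : (2 * Real.pi * Complex.I * ((Complex.arg z / (2 * Real.pi) + 1/2 : ℝ) : ℂ)) =
        (Complex.arg z : ℂ) * Complex.I + Real.pi * Complex.I := by
      push_cast; field_simp
    rw [h1, Complex.exp_add, Complex.exp_pi_mul_I]
    have h2 : ((a : ℂ)) * (Complex.exp ((Complex.arg z : ℂ) * Complex.I) * -1)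
        = ((|a| : ℝ) : ℂ) * Complex.exp ((Complex.arg z : ℂ) * Complex.I) := by
      rw [abs_of_neg hneg]; push_cast; ring
    rw [h2, ← hz, Complex.norm_mul_exp_arg_mul_I]
  · refine ⟨Complex.arg z / (2 * Real.pi), ?_⟩
    have h1 : (2 * Real.pi * Complex.I * ((Complex.arg z / (2 * Real.pi) : ℝ) : ℂ)) =
        (Complex.arg z : ℂ) * Complex.I := by
      push_cast; field_simp
    rw [h1, show ((a : ℂ)) = ((|a| : ℝ) : ℂ) by rw [abs_of_pos hpos], ← hz,
      Complex.norm_mul_exp_arg_mul_I]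

lemma circleint_tendsto {g : ℕ → ℂ → ℂ} {G : ℂ → ℂ} {R : ℝ} (hR : 0 < R)
    (hg : ∀ n, ContinuousOn (g n) (Metric.sphere (0:ℂ) R))
    (hG : ContinuousOn G (Metric.sphere (0:ℂ) R))
    (h : TendstoUniformlyOn g G Filter.atTop (Metric.sphere (0:ℂ) R)) :
    Filter.Tendsto (fun n => ∮ z in C(0, R), z⁻¹ • g n z) Filter.atTop
      (𝓝 (∮ z in C(0, R), z⁻¹ • G z)) := by
  have hzne : ∀ z ∈ Metric.sphere (0:ℂ) R, z ≠ 0 := by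
    intro z hz h0
    rw [mem_sphere_zero_iff_norm, h0] at hz
    simp at hz; exact hR.ne' hz.symm
  have hinv : ContinuousOn (fun z : ℂ => z⁻¹) (Metric.sphere (0:ℂ) R) :=
    ContinuousOn.inv₀ continuousOn_id hzne
  have hintG : CircleIntegrable (fun z => z⁻¹ • G z) 0 R :=
    (hinv.smul hG).circleIntegrable hR.le
  rw [Metric.tendsto_atTop]
  intro ε hε
  have hε' : 0 < ε / (4 * Real.pi + 1) := by positivity
  obtain ⟨N, hN⟩ := Filter.eventually_atTop.mp ((Metric.tendstoUniformlyOn_iff.mp h) _ hε')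
  refine ⟨N, fun n hn => ?_⟩
  have hintg : CircleIntegrable (fun z => z⁻¹ • g n z) 0 R :=
    (hinv.smul (hg n)).circleIntegrable hR.le
  have hsub : (∮ z in C(0, R), z⁻¹ • g n z) - (∮ z in C(0, R), z⁻¹ • G z)
      = ∮ z in C(0, R), (z⁻¹ • g n z - z⁻¹ • G z) :=
    (circleIntegral.integral_sub hintg hintG).symm
  have hbound : ∀ z ∈ Metric.sphere (0:ℂ) R, ‖z⁻¹ • g n z - z⁻¹ • G z‖ ≤ R⁻¹ * (ε / (4 * Real.pi + 1)) := by
    intro z hz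
    have habs : ‖z‖ = R := by simpa using mem_sphere_zero_iff_norm.mp hz
    rw [← smul_sub, norm_smul]
    have : ‖z⁻¹‖ = R⁻¹ := by simp [habs]
    rw [this]
    gcongr
    have := hN n hn z hz
    rw [dist_comm, dist_eq_norm] at this
    exact this.le
  have hle := circleIntegral.norm_integral_le_of_norm_le_const hR.le hbound
  rw [dist_eq_norm, hsub]
  calc ‖∮ z in C(0, R), (z⁻¹ • g n z - z⁻¹ • G z)‖
      ≤ 2 * Real.pi * R * (R⁻¹ * (ε / (4 * Real.pi + 1))) := hle
    _ < ε := by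
        rw [show 2 * Real.pi * R * (R⁻¹ * (ε / (4 * Real.pi + 1)))
            = (2 * Real.pi) * (ε / (4 * Real.pi + 1)) by field_simp]
        rw [div_eq_inv_mul, ← mul_assoc]
        nlinarith [Real.pi_pos, mul_pos hε (inv_pos.mpr (by positivity : (0:ℝ) < 4*Real.pi+1)),
          inv_mul_cancel₀ (by positivity : (4*Real.pi+1 : ℝ) ≠ 0)]
theorem stmt_14 (r θ : ℝ) (hr : 0 < r) (f : ℂ → ℂ)
    (hf : DifferentiableOn ℂ f (Metric.ball 0 r))
    (a : ℕ → ℝ) (ha0 : ∀ n : ℕ, a n ≠ 0) (har : ∀ n : ℕ, |a n| < r / 2)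
    (halim : Filter.Tendsto a Filter.atTop (nhds 0))
    (F : ℕ → ℝ → ℝ) (hF : ∀ (n : ℕ) (x : ℝ), F n (x + 1) = F n x + 1)
    (fn : ℕ → ℂ → ℂ)
    (hfn : ∀ n : ℕ, DifferentiableOn ℂ (fn n)
      {z : ℂ | |a n| / 2 < ‖z‖ ∧ ‖z‖ < r})
    (hconj : ∀ (n : ℕ) (x : ℝ),
      fn n ((a n : ℂ) * Complex.exp (2 * Real.pi * Complex.I * (x : ℂ))) =
        (a n : ℂ) * Complex.exp (2 * Real.pi * Complex.I * (F n x : ℂ)))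
    (huc : ∀ Kc : Set ℂ, Kc ⊆ {z : ℂ | 0 < ‖z‖ ∧ ‖z‖ < r} →
      IsCompact Kc → TendstoUniformlyOn (fun n => fn n) f Filter.atTop Kc)
    (hFuc : TendstoUniformly (fun n x => F n x) (fun x => x + θ) Filter.atTop) :
    f 0 = 0 ∧ deriv f 0 = Complex.exp (2 * Real.pi * Complex.I * (θ : ℂ)) := by
  have hπ := Real.pi_pos
  set ρ : ℝ := r / 2 with hρdef
  have hρ : 0 < ρ := by positivity
  have hρr : ρ < r := by rw [hρdef]; linarith
  have h2πI : (2 * Real.pi * Complex.I : ℂ) ≠ 0 := by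
    simp [Complex.I_ne_zero, Real.pi_ne_zero]
  -- membership on spheres
  have habs_sphere : ∀ (R : ℝ), ∀ z ∈ Metric.sphere (0:ℂ) R, ‖z‖ = R := by
    intro R z hz
    simpa using mem_sphere_zero_iff_norm.mp hz
  have hzneρ : ∀ z ∈ Metric.sphere (0:ℂ) ρ, z ≠ 0 := by
    intro z hz h0
    have := habs_sphere ρ z hz
    rw [h0] at this; simp at this; exact hρ.ne this
  -- Cauchy formula on the disc
  have key : ∀ g : ℂ → ℂ, DifferentiableOn ℂ g (Metric.ball 0 r) →
      (∮ z in C(0, ρ), z⁻¹ • g z) = (2 * Real.pi * Complex.I : ℂ) • g 0 := by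
    intro g hg
    have h := circleIntegral_sub_center_inv_smul_of_differentiable_on_off_countable
      (c := (0:ℂ)) hρ Set.countable_empty
      (hg.continuousOn.mono (Metric.closedBall_subset_ball hρr))
      (fun z hz => hg.differentiableAt
        (Metric.isOpen_ball.mem_nhds (Metric.ball_subset_ball hρr.le hz.1)))
    simpa [sub_zero] using h
  -- annulus: move the contour to the circle of radius |a n|
  have ann : ∀ n, ∀ g : ℂ → ℂ,
      DifferentiableOn ℂ g {z : ℂ | |a n| / 2 < ‖z‖ ∧ ‖z‖ < r} →
      (∮ z in C(0, ρ), z⁻¹ • g z) = ∮ z in C(0, |a n|), z⁻¹ • g z := by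
    intro n g hg
    have h0 : 0 < |a n| := abs_pos.mpr (ha0 n)
    have hopen : IsOpen {z : ℂ | |a n| / 2 < ‖z‖ ∧ ‖z‖ < r} := by
      have : {z : ℂ | |a n| / 2 < ‖z‖ ∧ ‖z‖ < r}
          = (fun z : ℂ => ‖z‖) ⁻¹' (Set.Ioo (|a n| / 2) r) := rfl
      rw [this]; exact isOpen_Ioo.preimage continuous_norm
    have hsubA : (Metric.closedBall (0:ℂ) ρ \ Metric.ball 0 (|a n|)) ⊆
        {z : ℂ | |a n| / 2 < ‖z‖ ∧ ‖z‖ < r} := by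
      intro z hz
      have h1 : ‖z‖ ≤ ρ := by
        simpa [Complex.dist_eq, sub_zero] using Metric.mem_closedBall.mp hz.1
      have h2 : ¬ ‖z‖ < |a n| := by
        intro hlt
        exact hz.2 (by simpa [Complex.dist_eq, sub_zero] using hlt)
      exact ⟨by push_neg at h2; linarith, lt_of_le_of_lt h1 hρr⟩
    have h := circleIntegral_sub_center_inv_smul_eq_of_differentiable_on_annulus_off_countable
      (c := (0:ℂ)) h0 (har n).le Set.countable_empty
      (hg.continuousOn.mono hsubA)
      (fun z hz => hg.differentiableAt (hopen.mem_nhds (hsubA ⟨Metric.ball_subset_closedBall hz.1.1,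
        fun hm => hz.1.2 (Metric.ball_subset_closedBall hm)⟩)))
    simpa [sub_zero] using h
  -- uniform convergence on the circle of radius ρ
  have hsphsub : Metric.sphere (0:ℂ) ρ ⊆ {z : ℂ | 0 < ‖z‖ ∧ ‖z‖ < r} := by
    intro z hz
    rw [Set.mem_setOf_eq, habs_sphere ρ z hz]
    exact ⟨hρ, hρr⟩
  have hucρ : TendstoUniformlyOn (fun n => fn n) f Filter.atTop (Metric.sphere (0:ℂ) ρ) :=
    huc _ hsphsub (isCompact_sphere _ _)
  have hContfn : ∀ n, ContinuousOn (fn n) (Metric.sphere (0:ℂ) ρ) := by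
    intro n
    refine (hfn n).continuousOn.mono ?_
    intro z hz
    rw [Set.mem_setOf_eq, habs_sphere ρ z hz]
    exact ⟨lt_of_le_of_lt (by linarith [abs_nonneg (a n)] : |a n| / 2 ≤ |a n|) (har n), hρr⟩
  have hContf : ContinuousOn f (Metric.sphere (0:ℂ) ρ) :=
    hf.continuousOn.mono (fun z hz => by
      simpa [Metric.mem_ball, Complex.dist_eq, sub_zero, habs_sphere ρ z hz] using hρr)
  -- value of fn on its invariant circle
  have hval : ∀ n, ∀ z ∈ Metric.sphere (0:ℂ) (|a n|), ∃ x : ℝ,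
      z = (a n : ℂ) * Complex.exp (2 * Real.pi * Complex.I * (x : ℂ)) :=
    fun n z hz => sphere_repr (ha0 n) (by simpa [_root_.abs_abs] using habs_sphere (|a n|) z hz)
  -- Part 1 : f 0 = 0
  have T1 := circleint_tendsto hρ hContfn hContf hucρ
  have E0 : ∀ n, ‖∮ z in C(0, |a n|), z⁻¹ • fn n z‖ ≤ 2 * Real.pi * |a n| := by
    intro n
    have hb : ∀ z ∈ Metric.sphere (0:ℂ) (|a n|), ‖z⁻¹ • fn n z‖ ≤ 1 := by
      intro z hz
      obtain ⟨x, rfl⟩ := hval n z hz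
      rw [hconj n x, norm_smul]
      have hane : ((a n : ℂ)) ≠ 0 := by exact_mod_cast ha0 n
      have h1 : ‖((a n : ℂ) * Complex.exp (2 * Real.pi * Complex.I * (x : ℂ)))⁻¹‖ = |a n|⁻¹ := by
        simp [map_inv₀, map_mul, abs_exp_two_pi]
      have h2 : ‖(a n : ℂ) * Complex.exp (2 * Real.pi * Complex.I * ((F n x : ℝ) : ℂ))‖ = |a n| := by
        simp [map_mul, abs_exp_two_pi]
      rw [h1, h2, inv_mul_cancel₀ (abs_ne_zero.mpr (ha0 n))]
    have := circleIntegral.norm_integral_le_of_norm_le_const (abs_nonneg (a n)) hb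
    simpa [_root_.abs_abs] using this
  have S1 : Filter.Tendsto (fun n => ∮ z in C(0, ρ), z⁻¹ • fn n z) Filter.atTop (𝓝 0) := by
    apply squeeze_zero_norm (fun n => ?_)
    · have : Filter.Tendsto (fun n => |a n|) Filter.atTop (𝓝 0) := by
        simpa using halim.abs
      simpa using this.const_mul (2 * Real.pi)
    · rw [ann n (fn n) (hfn n)]
      exact E0 n
  have hf0smul : (2 * Real.pi * Complex.I : ℂ) • f 0 = 0 := by
    refine tendsto_nhds_unique ?_ S1
    rw [← key f hf]
    exact T1
  have hf0 : f 0 = 0 := by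
    rcases smul_eq_zero.mp hf0smul with h | h
    · exact absurd h h2πI
    · exact h
  -- Part 2 : deriv f 0
  have hds : DifferentiableOn ℂ (dslope f 0) (Metric.ball 0 r) :=
    (Complex.differentiableOn_dslope (Metric.isOpen_ball.mem_nhds (by
      simpa [Metric.mem_ball] using hr))).mpr hf
  have keyd : (∮ z in C(0, ρ), z⁻¹ • dslope f 0 z)
      = (2 * Real.pi * Complex.I : ℂ) • deriv f 0 := by
    have := key _ hds
    rwa [dslope_same] at this
  have hcongr : (∮ z in C(0, ρ), z⁻¹ • (z⁻¹ • f z))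
      = ∮ z in C(0, ρ), z⁻¹ • dslope f 0 z := by
    refine circleIntegral.integral_congr hρ.le (fun z hz => ?_)
    have hzne := hzneρ z hz
    rw [dslope_of_ne _ hzne, slope_def_field, hf0]
    simp [smul_eq_mul, div_eq_inv_mul, sub_zero]
  -- uniform convergence of z⁻¹ • fn n z on the circle of radius ρ
  have hContg1 : ∀ n, ContinuousOn (fun z : ℂ => z⁻¹ • fn n z) (Metric.sphere (0:ℂ) ρ) :=
    fun n => (ContinuousOn.inv₀ continuousOn_id hzneρ).smul (hContfn n)
  have hContG1 : ContinuousOn (fun z : ℂ => z⁻¹ • f z) (Metric.sphere (0:ℂ) ρ) :=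
    (ContinuousOn.inv₀ continuousOn_id hzneρ).smul hContf
  have huc1 : TendstoUniformlyOn (fun n (z : ℂ) => z⁻¹ • fn n z) (fun z : ℂ => z⁻¹ • f z)
      Filter.atTop (Metric.sphere (0:ℂ) ρ) := by
    rw [Metric.tendstoUniformlyOn_iff]
    intro ε hε
    have hε' : 0 < ε * ρ := by positivity
    filter_upwards [Metric.tendstoUniformlyOn_iff.mp hucρ _ hε'] with n hn z hz
    have habs : ‖z‖ = ρ := habs_sphere ρ z hz
    have : dist (z⁻¹ • f z) (z⁻¹ • fn n z) = ‖(z : ℂ)⁻¹‖ * dist (f z) (fn n z) :=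
      dist_smul₀ _ _ _
    rw [this]
    have h1 : ‖(z : ℂ)⁻¹‖ = ρ⁻¹ := by simp [habs]
    rw [h1]
    calc ρ⁻¹ * dist (f z) (fn n z) < ρ⁻¹ * (ε * ρ) := by
          exact mul_lt_mul_of_pos_left (hn z hz) (inv_pos.mpr hρ)
      _ = ε := by field_simp
  have T2 := circleint_tendsto hρ hContg1 hContG1 huc1
  -- the inner-circle limit for the derivative coefficient
  have S2 : Filter.Tendsto (fun n => ∮ z in C(0, ρ), z⁻¹ • (z⁻¹ • fn n z)) Filter.atTop
      (𝓝 ((2 * Real.pi * Complex.I : ℂ) • Complex.exp (2 * Real.pi * Complex.I * (θ : ℂ)))) := by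
    have heq : ∀ n, (∮ z in C(0, ρ), z⁻¹ • (z⁻¹ • fn n z))
        = ∮ z in C(0, |a n|), z⁻¹ • (z⁻¹ • fn n z) := by
      intro n
      refine ann n _ ?_
      refine DifferentiableOn.smul (?_ : DifferentiableOn ℂ (fun z : ℂ => z⁻¹) _) (hfn n)
      refine DifferentiableOn.inv differentiableOn_id (fun z hz => ?_)
      intro h0
      rw [h0] at hz
      simp at hz
      linarith [abs_pos.mpr (ha0 n), hz.1]
    rw [Metric.tendsto_atTop]
    intro ε hε
    have hδ : 0 < ε / (8 * Real.pi ^ 2 + 1) := by positivity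
    obtain ⟨N, hN⟩ := Filter.eventually_atTop.mp ((Metric.tendstoUniformly_iff.mp hFuc) _ hδ)
    refine ⟨N, fun n hn => ?_⟩
    rw [heq n]
    set c : ℂ := Complex.exp (2 * Real.pi * Complex.I * (θ : ℂ)) with hc
    have h0 : 0 < |a n| := abs_pos.mpr (ha0 n)
    have hzneA : ∀ z ∈ Metric.sphere (0:ℂ) (|a n|), z ≠ 0 := by
      intro z hz hz0
      have := habs_sphere (|a n|) z hz
      rw [hz0] at this; simp at this; exact h0.ne this
    have hconst : (∮ z in C(0, |a n|), z⁻¹ • c) = (2 * Real.pi * Complex.I : ℂ) • c := by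
      have h1 : (∮ z in C(0, |a n|), (z - 0)⁻¹) = 2 * Real.pi * Complex.I :=
        circleIntegral.integral_sub_inv_of_mem_ball (by simpa [Metric.mem_ball] using h0)
      have h2 := circleIntegral.integral_smul_const (fun z : ℂ => z⁻¹) c 0 (|a n|)
      rw [h2]
      simp only [sub_zero] at h1
      rw [h1]
    have hint1 : CircleIntegrable (fun z : ℂ => z⁻¹ • (z⁻¹ • fn n z)) 0 (|a n|) := by
      refine ContinuousOn.circleIntegrable h0.le ?_
      have hContA : ContinuousOn (fn n) (Metric.sphere (0:ℂ) (|a n|)) := by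
        refine (hfn n).continuousOn.mono ?_
        intro z hz
        rw [Set.mem_setOf_eq, habs_sphere _ z hz]
        constructor
        · linarith
        · linarith [har n, hρr]
      exact (ContinuousOn.inv₀ continuousOn_id hzneA).smul
        ((ContinuousOn.inv₀ continuousOn_id hzneA).smul hContA)
    have hint2 : CircleIntegrable (fun z : ℂ => z⁻¹ • c) 0 (|a n|) :=
      ContinuousOn.circleIntegrable h0.le
        ((ContinuousOn.inv₀ continuousOn_id hzneA).smul continuousOn_const)
    have hsub : (∮ z in C(0, |a n|), z⁻¹ • (z⁻¹ • fn n z)) - (2 * Real.pi * Complex.I : ℂ) • c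
        = ∮ z in C(0, |a n|), (z⁻¹ • (z⁻¹ • fn n z) - z⁻¹ • c) := by
      rw [← hconst]
      exact (circleIntegral.integral_sub hint1 hint2).symm
    have hbound : ∀ z ∈ Metric.sphere (0:ℂ) (|a n|),
        ‖z⁻¹ • (z⁻¹ • fn n z) - z⁻¹ • c‖ ≤ |a n|⁻¹ * (2 * Real.pi * (ε / (8 * Real.pi ^ 2 + 1))) := by
      intro z hz
      obtain ⟨x, rfl⟩ := hval n z hz
      set w : ℂ := (a n : ℂ) * Complex.exp (2 * Real.pi * Complex.I * (x : ℂ)) with hw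
      have hane : ((a n : ℂ)) ≠ 0 := by exact_mod_cast ha0 n
      have hexpne : ∀ y : ℝ, Complex.exp (2 * Real.pi * Complex.I * (y : ℂ)) ≠ 0 :=
        fun y => Complex.exp_ne_zero _
      have hwne : w ≠ 0 := mul_ne_zero hane (hexpne x)
      have hkey : w⁻¹ • fn n w = Complex.exp (2 * Real.pi * Complex.I * ((F n x - x : ℝ) : ℂ)) := by
        rw [hw, hconj n x, smul_eq_mul]
        rw [mul_inv]
        have : ((F n x - x : ℝ) : ℂ) = (F n x : ℂ) - (x : ℂ) := by push_cast; ring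
        rw [this, mul_sub, Complex.exp_sub]
        field_simp
      rw [← smul_sub, norm_smul, hkey]
      have h1 : ‖w⁻¹‖ = |a n|⁻¹ := by
        rw [hw]
        simp [map_inv₀, map_mul, abs_exp_two_pi]
      rw [h1]
      gcongr
      calc ‖Complex.exp (2 * Real.pi * Complex.I * ((F n x - x : ℝ) : ℂ)) - c‖
          ≤ 2 * Real.pi * |(F n x - x) - θ| := exp_two_pi_lipschitz _ _
        _ ≤ 2 * Real.pi * (ε / (8 * Real.pi ^ 2 + 1)) := by
            gcongr
            have := hN n hn x
            rw [Real.dist_eq] at this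
            calc |F n x - x - θ| = |x + θ - F n x| := by rw [abs_sub_comm]; ring_nf
              _ ≤ ε / (8 * Real.pi ^ 2 + 1) := this.le
    have hle := circleIntegral.norm_integral_le_of_norm_le_const h0.le hbound
    rw [dist_eq_norm, hsub]
    calc ‖∮ z in C(0, |a n|), (z⁻¹ • (z⁻¹ • fn n z) - z⁻¹ • c)‖
        ≤ 2 * Real.pi * |a n| * (|a n|⁻¹ * (2 * Real.pi * (ε / (8 * Real.pi ^ 2 + 1)))) := by
          simpa [_root_.abs_abs] using hle
      _ < ε := by
          rw [show 2 * Real.pi * |a n| * (|a n|⁻¹ * (2 * Real.pi * (ε / (8 * Real.pi ^ 2 + 1))))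
              = (4 * Real.pi ^ 2) * (ε / (8 * Real.pi ^ 2 + 1)) by
            field_simp
            ring]
          rw [div_eq_inv_mul, ← mul_assoc]
          nlinarith [mul_pos hε (inv_pos.mpr (by positivity : (0:ℝ) < 8 * Real.pi ^ 2 + 1)),
            inv_mul_cancel₀ (by positivity : (8 * Real.pi ^ 2 + 1 : ℝ) ≠ 0), sq_nonneg Real.pi]
  have hderiv : deriv f 0 = Complex.exp (2 * Real.pi * Complex.I * (θ : ℂ)) := by
    have h1 : (2 * Real.pi * Complex.I : ℂ) • deriv f 0
        = (2 * Real.pi * Complex.I : ℂ) • Complex.exp (2 * Real.pi * Complex.I * (θ : ℂ)) := by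
      refine tendsto_nhds_unique ?_ S2
      rw [← keyd, ← hcongr]
      exact T2
    have := smul_right_injective ℂ h2πI h1
    exact this
  exact ⟨hf0, hderiv⟩
end
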